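/- A context x ∈ ℝ^d cannot be weakly attacked into pulling a* if and only if there exists an arm a ≠ a* such that X_{a*}x = 0, X_a x = 0, and α_{a*}‖x‖_{V_{a*}⁻¹} ≤ α_a‖x‖_{V_a⁻¹}. -/

import Mathlib

open Matrix

/-- The regularized Gram matrix `V = XᵀX + λI`. -/
noncomputable def Vmat {m d : ℕ} (lam : ℝ) (X : Matrix (Fin m) (Fin d) ℝ) :
    Matrix (Fin d) (Fin d) ℝ :=
  Xᵀ * X + lam • (1 : Matrix (Fin d) (Fin d) ℝ)

/-- The Mahalanobis norm `‖x‖_{V⁻¹} = √(xᵀ V⁻¹ x)`. -/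
noncomputable def mahNorm {d : ℕ} (V : Matrix (Fin d) (Fin d) ℝ) (x : Fin d → ℝ) : ℝ :=
  Real.sqrt (x ⬝ᵥ (V⁻¹ *ᵥ x))

/-- The post-attack ridge regression estimate `θ̂ = V⁻¹ Xᵀ (y + Δ)`. -/
noncomputable def thetaHat {m d : ℕ} (lam : ℝ) (X : Matrix (Fin m) (Fin d) ℝ)
    (y Δ : Fin m → ℝ) : Fin d → ℝ :=
  (Vmat lam X)⁻¹ *ᵥ (Xᵀ *ᵥ (y + Δ))

/-- The post-attack UCB index of arm `a` at context `x`: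
`xᵀ θ̂_a(Δ_a) + α_a ‖x‖_{V_a⁻¹}`. -/
noncomputable def ucbIndex {K d : ℕ} (lam : ℝ) (m : Fin K → ℕ)
    (X : ∀ a, Matrix (Fin (m a)) (Fin d) ℝ) (y : ∀ a, Fin (m a) → ℝ)
    (α : Fin K → ℝ) (Δ : ∀ a, Fin (m a) → ℝ) (x : Fin d → ℝ) (a : Fin K) : ℝ :=
  x ⬝ᵥ thetaHat lam (X a) (y a) (Δ a) + α a * mahNorm (Vmat lam (X a)) x

/-- The perturbation family `Δ` ε-strongly attacks context `x` into pulling arm `astar`. -/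
def StronglyAttacks {K d : ℕ} (lam : ℝ) (m : Fin K → ℕ)
    (X : ∀ a, Matrix (Fin (m a)) (Fin d) ℝ) (y : ∀ a, Fin (m a) → ℝ)
    (α : Fin K → ℝ) (astar : Fin K) (ε : ℝ)
    (Δ : ∀ a, Fin (m a) → ℝ) (x : Fin d → ℝ) : Prop :=
  ∀ a : Fin K, a ≠ astar →
    ucbIndex lam m X y α Δ x astar ≥ ε + ucbIndex lam m X y α Δ x a

/-- The perturbation family `Δ` weakly attacks context `x` into pulling arm `astar`. -/
def WeaklyAttacks {K d : ℕ} (lam : ℝ) (m : Fin K → ℕ)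
    (X : ∀ a, Matrix (Fin (m a)) (Fin d) ℝ) (y : ∀ a, Fin (m a) → ℝ)
    (α : Fin K → ℝ) (astar : Fin K)
    (Δ : ∀ a, Fin (m a) → ℝ) (x : Fin d → ℝ) : Prop :=
  ∀ a : Fin K, a ≠ astar →
    ucbIndex lam m X y α Δ x astar > ucbIndex lam m X y α Δ x a

lemma Vmat_transpose {md d : ℕ} (lam : ℝ) (X : Matrix (Fin md) (Fin d) ℝ) :
    (Vmat lam X)ᵀ = Vmat lam X := by
  simp [Vmat, transpose_add, transpose_mul, transpose_smul]

lemma Vmat_posDef {md d : ℕ} (lam : ℝ) (hlam : 0 < lam) (X : Matrix (Fin md) (Fin d) ℝ) :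
    (Vmat lam X).PosDef := by
  have h1 : (Xᵀ * X).PosSemidef := by
    have := Matrix.posSemidef_conjTranspose_mul_self X
    simpa using this
  have h2 : (lam • (1 : Matrix (Fin d) (Fin d) ℝ)).PosDef := by
    exact Matrix.PosDef.one.smul hlam
  exact Matrix.PosDef.posSemidef_add h1 h2

lemma Vmat_inv_transpose {md d : ℕ} (lam : ℝ) (X : Matrix (Fin md) (Fin d) ℝ) :
    ((Vmat lam X)⁻¹)ᵀ = (Vmat lam X)⁻¹ := by
  rw [Matrix.transpose_nonsing_inv, Vmat_transpose]

lemma dot_thetaHat {md d : ℕ} (lam : ℝ) (X : Matrix (Fin md) (Fin d) ℝ)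
    (y Δ : Fin md → ℝ) (x : Fin d → ℝ) :
    x ⬝ᵥ thetaHat lam X y Δ = (X *ᵥ ((Vmat lam X)⁻¹ *ᵥ x)) ⬝ᵥ (y + Δ) := by
  rw [thetaHat, dotProduct_mulVec, dotProduct_mulVec]
  congr 1
  have h1 : x ᵥ* (Vmat lam X)⁻¹ = (Vmat lam X)⁻¹ *ᵥ x := by
    conv_lhs => rw [← Vmat_inv_transpose lam X, vecMul_transpose]
  rw [h1, vecMul_transpose]

lemma Vmat_mulVec {md d : ℕ} (lam : ℝ) (X : Matrix (Fin md) (Fin d) ℝ) (v : Fin d → ℝ) :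
    Vmat lam X *ᵥ v = Xᵀ *ᵥ (X *ᵥ v) + lam • v := by
  simp [Vmat, add_mulVec, mulVec_mulVec, smul_mulVec]

lemma mulVec_inv_eq_zero_iff {md d : ℕ} (lam : ℝ) (hlam : 0 < lam)
    (X : Matrix (Fin md) (Fin d) ℝ) (x : Fin d → ℝ) :
    X *ᵥ ((Vmat lam X)⁻¹ *ᵥ x) = 0 ↔ X *ᵥ x = 0 := by
  have hu : IsUnit (Vmat lam X).det :=
    (Matrix.isUnit_iff_isUnit_det _).mp (Vmat_posDef lam hlam X).isUnit
  constructor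
  · intro h
    have hx : x = lam • ((Vmat lam X)⁻¹ *ᵥ x) := by
      have h2 := Vmat_mulVec lam X ((Vmat lam X)⁻¹ *ᵥ x)
      rw [mulVec_mulVec, Matrix.mul_nonsing_inv _ hu, one_mulVec, h] at h2
      simpa using h2
    rw [hx, mulVec_smul, h, smul_zero]
  · intro h
    have hx : (Vmat lam X)⁻¹ *ᵥ x = lam⁻¹ • x := by
      have h2 : (Vmat lam X)⁻¹ *ᵥ (Vmat lam X *ᵥ x) = x := by
        rw [mulVec_mulVec, Matrix.nonsing_inv_mul _ hu, one_mulVec]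
      rw [Vmat_mulVec, h, mulVec_zero, zero_add, mulVec_smul] at h2
      have h3 : lam⁻¹ • (lam • ((Vmat lam X)⁻¹ *ᵥ x)) = lam⁻¹ • x := by rw [h2]
      rwa [smul_smul, inv_mul_cancel₀ hlam.ne', one_smul] at h3
    rw [hx, mulVec_smul, h, smul_zero]

lemma dot_thetaHat_eq_zero {md d : ℕ} (lam : ℝ) (hlam : 0 < lam)
    (X : Matrix (Fin md) (Fin d) ℝ) (y Δ : Fin md → ℝ) (x : Fin d → ℝ)
    (hx : X *ᵥ x = 0) : x ⬝ᵥ thetaHat lam X y Δ = 0 := by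
  rw [dot_thetaHat, (mulVec_inv_eq_zero_iff lam hlam X x).mpr hx, zero_dotProduct]

lemma dot_thetaHat_smul {md d : ℕ} (lam : ℝ) (X : Matrix (Fin md) (Fin d) ℝ)
    (y : Fin md → ℝ) (x : Fin d → ℝ) (t : ℝ) :
    x ⬝ᵥ thetaHat lam X y (t • (X *ᵥ ((Vmat lam X)⁻¹ *ᵥ x)))
      = x ⬝ᵥ thetaHat lam X y 0
        + t * ((X *ᵥ ((Vmat lam X)⁻¹ *ᵥ x)) ⬝ᵥ (X *ᵥ ((Vmat lam X)⁻¹ *ᵥ x))) := by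
  rw [dot_thetaHat, dot_thetaHat]
  simp [dotProduct_add, dotProduct_smul, smul_eq_mul]

lemma exists_delta_eq {md d : ℕ} (lam : ℝ) (hlam : 0 < lam)
    (X : Matrix (Fin md) (Fin d) ℝ) (y : Fin md → ℝ) (x : Fin d → ℝ)
    (hX : X *ᵥ x ≠ 0) (c : ℝ) :
    ∃ Δ : Fin md → ℝ, x ⬝ᵥ thetaHat lam X y Δ = c := by
  set w := X *ᵥ ((Vmat lam X)⁻¹ *ᵥ x) with hwdef
  have hw : w ≠ 0 := fun h => hX ((mulVec_inv_eq_zero_iff lam hlam X x).mp h)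
  have hs : 0 < w ⬝ᵥ w := by
    have := Matrix.dotProduct_self_star_pos_iff.mpr hw
    simpa using this
  refine ⟨((c - x ⬝ᵥ thetaHat lam X y 0) / (w ⬝ᵥ w)) • w, ?_⟩
  rw [dot_thetaHat_smul, div_mul_cancel₀ _ hs.ne']
  ring

/-- A context `x` cannot be weakly attacked into pulling `a*` iff some non-target arm
`a` satisfies `X_{a*}x = 0`, `X_a x = 0` and `α_{a*}‖x‖_{V_{a*}⁻¹} ≤ α_a‖x‖_{V_a⁻¹}`. -/
theorem cannot_weakly_attack_iff {K d : ℕ} (hK : 2 ≤ K) (hd : 1 ≤ d)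
    (lam : ℝ) (hlam : 0 < lam) (m : Fin K → ℕ)
    (X : ∀ a, Matrix (Fin (m a)) (Fin d) ℝ) (y : ∀ a, Fin (m a) → ℝ)
    (α : Fin K → ℝ) (astar : Fin K) (x : Fin d → ℝ) :
    (¬ ∃ Δ : ∀ a, Fin (m a) → ℝ, WeaklyAttacks lam m X y α astar Δ x) ↔
      ∃ a : Fin K, a ≠ astar ∧ X astar *ᵥ x = 0 ∧ X a *ᵥ x = 0 ∧
        α astar * mahNorm (Vmat lam (X astar)) x
          ≤ α a * mahNorm (Vmat lam (X a)) x := by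
  classical
  constructor
  · intro hno
    by_contra hex
    push_neg at hex
    apply hno
    by_cases hstar : X astar *ᵥ x = 0
    · -- target arm's estimate is pinned; push every other arm down
      set cstar := α astar * mahNorm (Vmat lam (X astar)) x with hcstar
      set Δ : ∀ a, Fin (m a) → ℝ := fun a => dite (X a *ᵥ x = 0) (fun _ => 0)
        (fun h => Classical.choose (exists_delta_eq lam hlam (X a) (y a) x h
          (cstar - 1 - α a * mahNorm (Vmat lam (X a)) x))) with hΔdef
      refine ⟨Δ, ?_⟩
      intro a ha
      have hastar : ucbIndex lam m X y α Δ x astar = cstar := by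
        rw [ucbIndex, dot_thetaHat_eq_zero lam hlam _ _ _ _ hstar, zero_add]
      rw [hastar]
      by_cases h : X a *ᵥ x = 0
      · have : ucbIndex lam m X y α Δ x a = α a * mahNorm (Vmat lam (X a)) x := by
          rw [ucbIndex, dot_thetaHat_eq_zero lam hlam _ _ _ _ h, zero_add]
        rw [this]
        exact hex a ha hstar h
      · have hspec := Classical.choose_spec (exists_delta_eq lam hlam (X a) (y a) x h
          (cstar - 1 - α a * mahNorm (Vmat lam (X a)) x))
        have : ucbIndex lam m X y α Δ x a = cstar - 1 := by
          rw [ucbIndex]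
          have hda : Δ a = Classical.choose (exists_delta_eq lam hlam (X a) (y a) x h
            (cstar - 1 - α a * mahNorm (Vmat lam (X a)) x)) := by
            rw [hΔdef]; exact dif_neg h
          rw [hda, hspec]
          ring
        rw [this]
        linarith
    · -- we can raise the target arm's estimate arbitrarily
      set C := (Finset.univ : Finset (Fin K)).sup' ⟨astar, Finset.mem_univ _⟩
        (fun a => x ⬝ᵥ thetaHat lam (X a) (y a) 0 + α a * mahNorm (Vmat lam (X a)) x) with hC
      obtain ⟨Δs, hΔs⟩ := exists_delta_eq lam hlam (X astar) (y astar) x hstar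
        (C + 1 - α astar * mahNorm (Vmat lam (X astar)) x)
      set Δ : ∀ a, Fin (m a) → ℝ := Function.update (fun a => 0) astar Δs with hΔdef
      refine ⟨Δ, ?_⟩
      intro a ha
      have hastar : ucbIndex lam m X y α Δ x astar = C + 1 := by
        have hda : Δ astar = Δs := Function.update_self _ _ _
        rw [ucbIndex, hda, hΔs]
        ring
      have haval : ucbIndex lam m X y α Δ x a
          = x ⬝ᵥ thetaHat lam (X a) (y a) 0 + α a * mahNorm (Vmat lam (X a)) x := by
        have hda : Δ a = 0 := Function.update_of_ne ha _ _
        rw [ucbIndex, hda]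
      have hle : x ⬝ᵥ thetaHat lam (X a) (y a) 0 + α a * mahNorm (Vmat lam (X a)) x ≤ C := by
        rw [hC]
        exact Finset.le_sup'
          (fun a => x ⬝ᵥ thetaHat lam (X a) (y a) 0 + α a * mahNorm (Vmat lam (X a)) x)
          (Finset.mem_univ a)
      rw [hastar, haval]
      linarith
  · rintro ⟨a, ha, h1, h2, h3⟩ ⟨Δ, hΔ⟩
    have h := hΔ a ha
    rw [ucbIndex, ucbIndex, dot_thetaHat_eq_zero lam hlam _ _ _ _ h1,
      dot_thetaHat_eq_zero lam hlam _ _ _ _ h2, zero_add, zero_add] at h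
    exact absurd h (not_lt.mpr h3)
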